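/- Let (X,*) be a quasigroup quandle and fix an element d₀ ∈ X. Let R be the subgroup of C₂ = ℤ⟨X×X⟩ generated by all elements (a,a), all elements (d₀,a), and all elements ∂₃(a,b,c) for a,b,c ∈ X. Then the composite of the inclusion ker ∂₂ ↪ C₂ with the quotient map C₂ → C₂/R induces an isomorphism of abelian groups H₂^Q(X) ≅ C₂/R. -/

import Mathlib

open FreeAbelianGroup

private lemma fab_hom_ext {α β : Type*} [AddCommGroup β]
    (f g : FreeAbelianGroup α →+ β) (h : ∀ x, f (of x) = g (of x)) : f = g := by
  ext z
  exact h z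

/-- **Proposition.** Let `(X, op)` be a quasigroup quandle and fix `d₀ ∈ X`.
Let `R` be the subgroup of `C₂ = ℤ⟨X × X⟩` generated by all `(a, a)`, all `(d₀, a)`,
and all `∂₃(a, b, c)`.  Then the composite of the inclusion `ker ∂₂ ↪ C₂` with the
quotient map `C₂ → C₂/R` induces an isomorphism
`H₂^Q(X) = ker ∂₂ / (im ∂₃ + ⟨(a,a)⟩) ≅ C₂/R`. -/
theorem second_quandle_homology_iso_quotient_of_quasigroup_quandle
    {X : Type*} (op : X → X → X)
    (hidem : ∀ a, op a a = a)
    (hinv : ∀ b, Function.Bijective fun x => op x b)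
    (hdist : ∀ a b c, op (op a b) c = op (op a c) (op b c))
    (hquasi : ∀ a b, ∃! c, op a c = b)
    (d₀ : X)
    (d2 : FreeAbelianGroup (X × X) →+ FreeAbelianGroup X)
    (hd2 : d2 = FreeAbelianGroup.lift fun p : X × X => of p.1 - of (op p.1 p.2))
    (d3 : FreeAbelianGroup (X × X × X) →+ FreeAbelianGroup (X × X))
    (hd3 : d3 = FreeAbelianGroup.lift fun p : X × X × X =>
      of (p.1, p.2.2) - of (op p.1 p.2.1, p.2.2) - of (p.1, p.2.1)
        + of (op p.1 p.2.2, op p.2.1 p.2.2))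
    (B : AddSubgroup (FreeAbelianGroup (X × X)))
    (hB : B = d3.range ⊔ AddSubgroup.closure (Set.range fun a : X => of (a, a)))
    (R : AddSubgroup (FreeAbelianGroup (X × X)))
    (hR : R = AddSubgroup.closure
      ((Set.range fun a : X => of (a, a)) ∪ (Set.range fun a : X => of (d₀, a)) ∪
        (Set.range fun q : X × X × X => d3 (of q)))) :
    ∃ e : (d2.ker ⧸ B.addSubgroupOf d2.ker) ≃+ (FreeAbelianGroup (X × X) ⧸ R),
      ∀ z : d2.ker, e (QuotientAddGroup.mk z) = QuotientAddGroup.mk z.1 := by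
  classical
  -- the left translation by d₀ is a bijection
  have hσinj : Function.Injective (fun a => op d₀ a) := by
    intro a b hab
    obtain ⟨c, -, hc⟩ := hquasi d₀ (op d₀ b)
    exact (hc a hab).trans (hc b rfl).symm
  have hσsurj : Function.Surjective (fun a => op d₀ a) := fun b =>
    ⟨(hquasi d₀ b).exists.choose, (hquasi d₀ b).exists.choose_spec⟩
  set E : X ≃ X := Equiv.ofBijective _ ⟨hσinj, hσsurj⟩ with hE
  have hEapp : ∀ a, E a = op d₀ a := fun a => rfl
  -- d₂ kills images of d₃
  have hd2d3 : ∀ y, d2 (d3 y) = 0 := by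
    intro y
    have h : d2.comp d3 = 0 := by
      apply fab_hom_ext
      intro p
      simp only [AddMonoidHom.comp_apply, hd3, hd2, lift_apply_of, map_add, map_sub,
        AddMonoidHom.zero_apply]
      rw [hdist p.1 p.2.1 p.2.2]
      abel
    calc d2 (d3 y) = d2.comp d3 y := rfl
    _ = 0 := by rw [h]; rfl
  -- d₂ kills diagonal generators
  have hdiag : ∀ a : X, d2 (of ((a, a) : X × X)) = 0 := by
    intro a
    rw [hd2, lift_apply_of]
    simp [hidem a]
  -- B ≤ ker d₂
  have hBker : B ≤ d2.ker := by
    rw [hB]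
    apply sup_le
    · rintro x ⟨y, rfl⟩
      exact hd2d3 y
    · rw [AddSubgroup.closure_le]
      rintro x ⟨a, rfl⟩
      exact hdiag a
  -- B ≤ R
  have hdiagR : ∀ a : X, of ((a, a) : X × X) ∈ R := by
    intro a
    rw [hR]
    exact AddSubgroup.subset_closure (Or.inl (Or.inl ⟨a, rfl⟩))
  have hdiagB : ∀ a : X, of ((a, a) : X × X) ∈ B := by
    intro a
    rw [hB]
    exact AddSubgroup.mem_sup_right (AddSubgroup.subset_closure ⟨a, rfl⟩)
  have hBR : B ≤ R := by
    rw [hB]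
    apply sup_le
    · rintro x ⟨y, rfl⟩
      refine FreeAbelianGroup.induction_on y (by rw [map_zero]; exact zero_mem _) (fun q => ?_)
        (fun q hq => by rw [map_neg]; exact neg_mem hq)
        (fun u v hu hv => by rw [map_add]; exact add_mem hu hv)
      rw [hR]
      exact AddSubgroup.subset_closure (Or.inr ⟨q, rfl⟩)
    · rw [AddSubgroup.closure_le]
      rintro x ⟨a, rfl⟩
      exact hdiagR a
  -- the subgroup generated by (d₀, a)
  set D : AddSubgroup (FreeAbelianGroup (X × X)) :=
    AddSubgroup.closure (Set.range fun a : X => of ((d₀, a) : X × X)) with hD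
  have hRBD : R ≤ B ⊔ D := by
    rw [hR, AddSubgroup.closure_le]
    rintro x ((⟨a, rfl⟩ | ⟨a, rfl⟩) | ⟨q, rfl⟩)
    · exact AddSubgroup.mem_sup_left (hdiagB a)
    · exact AddSubgroup.mem_sup_right (AddSubgroup.subset_closure ⟨a, rfl⟩)
    · apply AddSubgroup.mem_sup_left
      rw [hB]
      exact AddSubgroup.mem_sup_left ⟨of q, rfl⟩
  set j : FreeAbelianGroup X →+ FreeAbelianGroup (X × X) :=
    FreeAbelianGroup.lift (fun a : X => of ((d₀, a) : X × X)) with hj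
  have hDj : D ≤ j.range := by
    rw [hD, AddSubgroup.closure_le]
    rintro x ⟨a, rfl⟩
    exact ⟨of a, by simp [hj, lift_apply_of]⟩
  -- key: elements of D in ker d₂ lie in B
  have hDker : ∀ t ∈ D, d2 t = 0 → t ∈ B := by
    intro t htD htk
    obtain ⟨u, rfl⟩ := hDj htD
    set ε : FreeAbelianGroup X →+ ℤ := FreeAbelianGroup.lift (fun _ : X => (1 : ℤ)) with hε
    have hcomp : d2.comp j =
        ((zmultiplesHom (FreeAbelianGroup X) (of d₀)).comp ε) - FreeAbelianGroup.map E := by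
      apply fab_hom_ext
      intro a
      simp only [AddMonoidHom.comp_apply, hj, hd2, lift_apply_of, AddMonoidHom.sub_apply,
        map_of_apply, hε, zmultiplesHom_apply, hEapp]
      simp
    have hmapEq : FreeAbelianGroup.map E u = (ε u) • of d₀ := by
      have h1 : d2 (j u) = (ε u) • of d₀ - FreeAbelianGroup.map E u := by
        calc d2 (j u) = (d2.comp j) u := rfl
        _ = _ := by rw [hcomp]; simp [zmultiplesHom_apply]
      rw [htk] at h1
      exact (sub_eq_zero.mp h1.symm).symm
    -- map E is injective
    have hmapinj : Function.Injective (FreeAbelianGroup.map E : FreeAbelianGroup X →+ _) := by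
      have hid : (FreeAbelianGroup.map E.symm).comp (FreeAbelianGroup.map (E : X → X)) =
          AddMonoidHom.id _ := by
        apply fab_hom_ext
        intro a
        simp [map_of_apply]
      intro x y hxy
      have := congrArg (FreeAbelianGroup.map E.symm) hxy
      calc x = ((FreeAbelianGroup.map E.symm).comp (FreeAbelianGroup.map (E : X → X))) x := by
              rw [hid]; rfl
      _ = ((FreeAbelianGroup.map E.symm).comp (FreeAbelianGroup.map (E : X → X))) y := this
      _ = y := by rw [hid]; rfl
    have hu : u = (ε u) • of d₀ := by
      apply hmapinj
      rw [hmapEq, map_zsmul, map_of_apply]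
      have : E d₀ = d₀ := by rw [hEapp, hidem]
      rw [this]
    have : j u = (ε u) • of ((d₀, d₀) : X × X) := by
      conv_lhs => rw [hu]
      rw [map_zsmul, hj, lift_apply_of]
    rw [this]
    exact zsmul_mem (hdiagB d₀) _
  -- R ∩ ker d₂ ≤ B
  have hRkerB : ∀ r ∈ R, d2 r = 0 → r ∈ B := by
    intro r hr hrk
    obtain ⟨b, hb, t, ht, rfl⟩ := AddSubgroup.mem_sup.mp (hRBD hr)
    have hbk : d2 b = 0 := hBker hb
    have htk : d2 t = 0 := by
      have := hrk
      rw [map_add, hbk, zero_add] at this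
      exact this
    exact add_mem hb (hDker t ht htk)
  -- surjectivity: every generator is in ker d₂ ⊔ R
  have hgen : ∀ p : X × X, of p ∈ d2.ker ⊔ R := by
    rintro ⟨a, b⟩
    obtain ⟨x₁, hx₁, -⟩ := hquasi d₀ a
    obtain ⟨x₂, hx₂, -⟩ := hquasi d₀ (op a b)
    have hzker : of ((a, b) : X × X) - of ((d₀, x₂) : X × X) + of ((d₀, x₁) : X × X)
        ∈ d2.ker := by
      rw [AddMonoidHom.mem_ker, map_add, map_sub, hd2]
      simp only [lift_apply_of, hx₁, hx₂]
      abel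
    have hrR : of ((d₀, x₂) : X × X) - of ((d₀, x₁) : X × X) ∈ R := by
      rw [hR]
      exact sub_mem (AddSubgroup.subset_closure (Or.inl (Or.inr ⟨x₂, rfl⟩)))
        (AddSubgroup.subset_closure (Or.inl (Or.inr ⟨x₁, rfl⟩)))
    have : of ((a, b) : X × X) =
        (of ((a, b) : X × X) - of ((d₀, x₂) : X × X) + of ((d₀, x₁) : X × X)) +
        (of ((d₀, x₂) : X × X) - of ((d₀, x₁) : X × X)) := by abel
    rw [this]
    exact add_mem (AddSubgroup.mem_sup_left hzker) (AddSubgroup.mem_sup_right hrR)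
  have htop : ∀ x : FreeAbelianGroup (X × X), x ∈ d2.ker ⊔ R := by
    intro x
    refine FreeAbelianGroup.induction_on x (zero_mem _) hgen
      (fun p hp => neg_mem hp) (fun u v hu hv => add_mem hu hv)
  -- construct the map
  set φ : d2.ker →+ FreeAbelianGroup (X × X) ⧸ R :=
    (QuotientAddGroup.mk' R).comp d2.ker.subtype with hφ
  have hφapp : ∀ z : d2.ker, φ z = QuotientAddGroup.mk z.1 := fun z => rfl
  have hφ0 : ∀ z ∈ B.addSubgroupOf d2.ker, φ z = 0 := by
    intro z hz
    rw [hφapp, QuotientAddGroup.eq_zero_iff]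
    exact hBR (AddSubgroup.mem_addSubgroupOf.mp hz)
  set ψ := QuotientAddGroup.lift (B.addSubgroupOf d2.ker) φ hφ0 with hψ
  have hψmk : ∀ z : d2.ker, ψ (QuotientAddGroup.mk z) = QuotientAddGroup.mk z.1 :=
    fun z => rfl
  have hψinj : Function.Injective ψ := by
    intro x y
    refine QuotientAddGroup.induction_on x (fun z₁ => ?_)
    refine QuotientAddGroup.induction_on y (fun z₂ h => ?_)
    rw [hψmk, hψmk] at h
    have hR' : -z₁.1 + z₂.1 ∈ R := (QuotientAddGroup.eq).mp h
    have hk : d2 (-z₁.1 + z₂.1) = 0 := by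
      rw [map_add, map_neg, z₁.2, z₂.2]
      simp
    have hBmem : -z₁.1 + z₂.1 ∈ B := hRkerB _ hR' hk
    exact (QuotientAddGroup.eq).mpr (AddSubgroup.mem_addSubgroupOf.mpr hBmem)
  have hψsurj : Function.Surjective ψ := by
    intro q
    refine QuotientAddGroup.induction_on q (fun x => ?_)
    obtain ⟨k, hk, r, hr, hkr⟩ := AddSubgroup.mem_sup.mp (htop x)
    refine ⟨QuotientAddGroup.mk ⟨k, hk⟩, ?_⟩
    rw [hψmk]
    have : (QuotientAddGroup.mk k : FreeAbelianGroup (X × X) ⧸ R) = QuotientAddGroup.mk x := by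
      rw [QuotientAddGroup.eq]
      rw [← hkr]
      simpa using hr
    exact this
  exact ⟨AddEquiv.ofBijective ψ ⟨hψinj, hψsurj⟩, fun z => hψmk z⟩
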